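/- arXiv:2012.10799 — 11 statements merged into one kernel-verified Lean document; each statement's English description precedes it below -/
import Mathlib

section
/- Let R be a commutative ring and c ∈ R. Suppose (x0,x1,x2,x3) and (y0,y1,y2,y3) both satisfy the split μ4-normal form equations with parameter c. Then, for each ℓ ∈ {0,1,2,3}, the 4-tuple s_ℓ((x0,x1,x2,x3),(y0,y1,y2,y3)) again satisfies the split μ4-normal form equations with parameter c. -/
/-- A point of `R⁴` satisfies the split μ4-normal form equations with parameter `c`. -/
def SplitMu4 {R : Type*} [CommRing R] (c : R) (p : R × R × R × R) : Prop :=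
  p.1 ^ 2 - p.2.2.1 ^ 2 = c ^ 2 * (p.2.1 * p.2.2.2) ∧
  p.2.1 ^ 2 - p.2.2.2 ^ 2 = c ^ 2 * (p.1 * p.2.2.1)

/-- Each of the four addition laws `s₀, s₁, s₂, s₃` maps pairs of points of the
split μ4-normal form curve to points of the curve.  Here `U_{jk} = x_j·y_k`. -/
theorem addition_laws_on_curve {R : Type*} [CommRing R]
    (c x0 x1 x2 x3 y0 y1 y2 y3 : R)
    (hx : SplitMu4 c (x0, x1, x2, x3)) (hy : SplitMu4 c (y0, y1, y2, y3)) :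
    SplitMu4 c
      ((x1 * y3) ^ 2 - (x3 * y1) ^ 2,
       c * ((x1 * y3) * (x2 * y0) - (x3 * y1) * (x0 * y2)),
       (x2 * y0) ^ 2 - (x0 * y2) ^ 2,
       c * ((x2 * y0) * (x3 * y1) - (x1 * y3) * (x0 * y2))) ∧
    SplitMu4 c
      (c * ((x0 * y3) * (x1 * y0) + (x2 * y1) * (x3 * y2)),
       (x1 * y0) ^ 2 - (x3 * y2) ^ 2,
       c * ((x0 * y3) * (x3 * y2) + (x1 * y0) * (x2 * y1)),
       (x0 * y3) ^ 2 - (x2 * y1) ^ 2) ∧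
    SplitMu4 c
      ((x0 * y0) ^ 2 - (x2 * y2) ^ 2,
       c * ((x0 * y0) * (x1 * y1) - (x2 * y2) * (x3 * y3)),
       (x1 * y1) ^ 2 - (x3 * y3) ^ 2,
       c * ((x0 * y0) * (x3 * y3) - (x1 * y1) * (x2 * y2))) ∧
    SplitMu4 c
      (c * ((x0 * y1) * (x3 * y0) + (x1 * y2) * (x2 * y3)),
       (x0 * y1) ^ 2 - (x2 * y3) ^ 2,
       c * ((x0 * y1) * (x1 * y2) + (x2 * y3) * (x3 * y0)),
       (x3 * y0) ^ 2 - (x1 * y2) ^ 2) := by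
  obtain ⟨h1, h2⟩ := hx
  obtain ⟨h3, h4⟩ := hy
  simp only [SplitMu4] at h1 h2 h3 h4 ⊢
  refine ⟨⟨?_, ?_⟩, ⟨?_, ?_⟩, ⟨?_, ?_⟩, ⟨?_, ?_⟩⟩
  · linear_combination (-1*x2 ^ 2*y2 ^ 4 + 2*x2 ^ 2*y0 ^ 2*y2 ^ 2 + -1*x0 ^ 2*y2 ^ 4 + -1*c ^ 2*x1*x3*y2 ^ 4 + c ^ 4*x2 ^ 2*y3 ^ 4 + -1*c ^ 4*x1*x3*y1*y2 ^ 2*y3 + c ^ 6*x2 ^ 2*y0*y2*y3 ^ 2) * h1 + (x3 ^ 2*y3 ^ 4 + -2*x3 ^ 2*y1 ^ 2*y3 ^ 2 + x1 ^ 2*y3 ^ 4 + c ^ 2*x0*x2*y3 ^ 4 + -1*c ^ 4*x3 ^ 2*y2 ^ 4 + c ^ 4*x0*x2*y0*y2*y3 ^ 2 + -1*c ^ 6*x3 ^ 2*y1*y2 ^ 2*y3) * h2 + (x2 ^ 4*y2 ^ 2 + -1*x2 ^ 4*y0 ^ 2 + -1*c ^ 2*x2 ^ 4*y1*y3 + 2*c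 ^ 2*x1*x2 ^ 2*x3*y2 ^ 2 + c ^ 4*x3 ^ 4*y2 ^ 2 + -1*c ^ 4*x1*x2 ^ 2*x3*y1*y3 + c ^ 6*x0*x2*x3 ^ 2*y2 ^ 2) * h3 + (-1*x3 ^ 4*y3 ^ 2 + x3 ^ 4*y1 ^ 2 + c ^ 2*x3 ^ 4*y0*y2 + -2*c ^ 2*x0*x2*x3 ^ 2*y3 ^ 2 + -1*c ^ 4*x2 ^ 4*y3 ^ 2 + c ^ 4*x0*x2*x3 ^ 2*y0*y2 + -1*c ^ 6*x1*x2 ^ 2*x3*y3 ^ 2) * h4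
  · ring
  · ring
  · linear_combination (-1*x2 ^ 2*y3 ^ 4 + 2*x2 ^ 2*y1 ^ 2*y3 ^ 2 + -1*x0 ^ 2*y3 ^ 4 + -1*c ^ 2*x1*x3*y3 ^ 4 + c ^ 4*x2 ^ 2*y0 ^ 4 + -1*c ^ 4*x1*x3*y0*y2*y3 ^ 2 + -1*c ^ 6*x2 ^ 2*y0 ^ 2*y1*y3) * h1 + (-2*x3 ^ 2*y0 ^ 2*y2 ^ 2 + x3 ^ 2*y0 ^ 4 + x1 ^ 2*y0 ^ 4 + c ^ 2*x0*x2*y0 ^ 4 + -1*c ^ 4*x3 ^ 2*y3 ^ 4 + -1*c ^ 4*x0*x2*y0 ^ 2*y1*y3 + -1*c ^ 6*x3 ^ 2*y0*y2*y3 ^ 2) * h2 + (-1*x3 ^ 4*y2 ^ 2 + x3 ^ 4*y0 ^ 2 + c ^ 2*x3 ^ 4*y1*y3 + 2*c ^ 2*x0*x2*x3 ^ 2*y0 ^ 2 + c ^ 4*x2 ^ 4*y0 ^ 2 + c ^ 4*x0*x2*x3 ^ 2*y1*y3 + c ^ 6*x1*x2 ^ 2*x3*y0 ^ 2) * h3 +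 (x2 ^ 4*y3 ^ 2 + -1*x2 ^ 4*y1 ^ 2 + -1*c ^ 2*x2 ^ 4*y0*y2 + 2*c ^ 2*x1*x2 ^ 2*x3*y3 ^ 2 + c ^ 4*x3 ^ 4*y3 ^ 2 + -1*c ^ 4*x1*x2 ^ 2*x3*y0*y2 + c ^ 6*x0*x2*x3 ^ 2*y3 ^ 2) * h4
  · linear_combination (-2*x2 ^ 2*y0 ^ 2*y2 ^ 2 + x2 ^ 2*y0 ^ 4 + x0 ^ 2*y0 ^ 4 + c ^ 2*x1*x3*y0 ^ 4 + -1*c ^ 4*x2 ^ 2*y1 ^ 4 + -1*c ^ 4*x1*x3*y0 ^ 2*y1*y3 + c ^ 6*x2 ^ 2*y0*y1 ^ 2*y2) * h1 + (2*x3 ^ 2*y1 ^ 2*y3 ^ 2 + -1*x3 ^ 2*y1 ^ 4 + -1*x1 ^ 2*y1 ^ 4 + -1*c ^ 2*x0*x2*y1 ^ 4 + c ^ 4*x3 ^ 2*y0 ^ 4 + c ^ 4*x0*x2*y0*y1 ^ 2*y2 + -1*c ^ 6*x3 ^ 2*y0 ^ 2*y1*y3) * h2 + (-1*x2 ^ 4*y2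 ^ 2 + x2 ^ 4*y0 ^ 2 + c ^ 2*x2 ^ 4*y1*y3 + 2*c ^ 2*x1*x2 ^ 2*x3*y0 ^ 2 + c ^ 4*x3 ^ 4*y0 ^ 2 + c ^ 4*x1*x2 ^ 2*x3*y1*y3 + c ^ 6*x0*x2*x3 ^ 2*y0 ^ 2) * h3 + (x3 ^ 4*y3 ^ 2 + -1*x3 ^ 4*y1 ^ 2 + -1*c ^ 2*x3 ^ 4*y0*y2 + -2*c ^ 2*x0*x2*x3 ^ 2*y1 ^ 2 + -1*c ^ 4*x2 ^ 4*y1 ^ 2 + -1*c ^ 4*x0*x2*x3 ^ 2*y0*y2 + -1*c ^ 6*x1*x2 ^ 2*x3*y1 ^ 2) * h4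
  · ring
  · ring
  · linear_combination (-2*x2 ^ 2*y1 ^ 2*y3 ^ 2 + x2 ^ 2*y1 ^ 4 + x0 ^ 2*y1 ^ 4 + c ^ 2*x1*x3*y1 ^ 4 + -1*c ^ 4*x2 ^ 2*y2 ^ 4 + -1*c ^ 4*x1*x3*y0*y1 ^ 2*y2 + -1*c ^ 6*x2 ^ 2*y1*y2 ^ 2*y3) * h1 + (-1*x3 ^ 2*y2 ^ 4 + 2*x3 ^ 2*y0 ^ 2*y2 ^ 2 + -1*x1 ^ 2*y2 ^ 4 + -1*c ^ 2*x0*x2*y2 ^ 4 + c ^ 4*x3 ^ 2*y1 ^ 4 + -1*c ^ 4*x0*x2*y1*y2 ^ 2*y3 + -1*c ^ 6*x3 ^ 2*y0*y1 ^ 2*y2) * h2 + (x3 ^ 4*y2 ^ 2 + -1*x3 ^ 4*y0 ^ 2 + -1*c ^ 2*x3 ^ 4*y1*y3 + 2*c ^ 2*x0*x2*x3 ^ 2*y2 ^ 2 + c ^ 4*x2 ^ 4*y2 ^ 2 + -1*c ^ 4*x0*x2*x3 ^ 2*y1*y3 + c ^ 6*x1*x2 ^ 2*x3*y2 ^ 2)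 * h3 + (-1*x2 ^ 4*y3 ^ 2 + x2 ^ 4*y1 ^ 2 + c ^ 2*x2 ^ 4*y0*y2 + 2*c ^ 2*x1*x2 ^ 2*x3*y1 ^ 2 + c ^ 4*x3 ^ 4*y1 ^ 2 + c ^ 4*x1*x2 ^ 2*x3*y0*y2 + c ^ 6*x0*x2*x3 ^ 2*y1 ^ 2) * h4
end

section
/- Let k be a field and c ∈ k. Suppose (x0,x1,x2,x3) and (y0,y1,y2,y3) both satisfy the split μ4-normal form equations with parameter c. Then the tuples s0((x),(y)) and s2((x),(y)) are projectively proportional: for all indices i, j ∈ {0,1,2,3}, the i-th coordinate of s0 times the j-th coordinate of s2 equals the j-th coordinate of s0 times the i-th coordinate of s2. -/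
/-- The addition laws `s₀` and `s₂` on the split μ4-normal form curve give
projectively proportional 4-tuples on any pair of points of the curve. -/
theorem s0_s2_projectively_proportional {k : Type*} [Field k]
    (c x0 x1 x2 x3 y0 y1 y2 y3 : k)
    (hx1 : x0 ^ 2 - x2 ^ 2 = c ^ 2 * (x1 * x3))
    (hx2 : x1 ^ 2 - x3 ^ 2 = c ^ 2 * (x0 * x2))
    (hy1 : y0 ^ 2 - y2 ^ 2 = c ^ 2 * (y1 * y3))
    (hy2 : y1 ^ 2 - y3 ^ 2 = c ^ 2 * (y0 * y2)) :
    let S0 : Fin 4 → k :=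
      ![(x1 * y3) ^ 2 - (x3 * y1) ^ 2,
        c * ((x1 * y3) * (x2 * y0) - (x3 * y1) * (x0 * y2)),
        (x2 * y0) ^ 2 - (x0 * y2) ^ 2,
        c * ((x2 * y0) * (x3 * y1) - (x1 * y3) * (x0 * y2))]
    let S2 : Fin 4 → k :=
      ![(x0 * y0) ^ 2 - (x2 * y2) ^ 2,
        c * ((x0 * y0) * (x1 * y1) - (x2 * y2) * (x3 * y3)),
        (x1 * y1) ^ 2 - (x3 * y3) ^ 2,
        c * ((x0 * y0) * (x3 * y3) - (x1 * y1) * (x2 * y2))]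
    ∀ i j : Fin 4, S0 i * S2 j = S0 j * S2 i := by
  intro S0 S2
  have h01 : S0 0 * S2 1 = S0 1 * S2 0 := by
    simp only [S0, S2, Matrix.cons_val_zero, Matrix.cons_val_one, Matrix.head_cons, Matrix.cons_val_two, Matrix.tail_cons, Matrix.cons_val_three]
    linear_combination ((1*c^3*x1*x2*y0*y1*y3^2) + (1*c*x0*x3*y0^2*y1*y2) + (-1*c*x1*x2*y0^3*y3)) * hx1 + ((1*c^5*x2*x3*y0*y1*y3^2) + (-1*c^3*x2*x3*y0^3*y3) + (1*c*x0*x1*y0*y1*y3^2) + (-1*c*x2*x3*y2*y3^3)) * hx2 + ((-1*c^5*x0*x2^2*x3*y0*y3) + (-1*c^3*x2*x3^3*y0*y3) + (1*c*x0*x2^2*x3*y1*y2) + (-1*c*x1*x2^3*y0*y3)) * hy1 + ((1*c^3*x0*x2^2*x3*y2*y3) + (-1*c*x0*x1*x3^2*y0*y1) + (1*c*x2*x3^3*y2*y3)) * hy2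
  have h02 : S0 0 * S2 2 = S0 2 * S2 0 := by
    simp only [S0, S2, Matrix.cons_val_zero, Matrix.cons_val_one, Matrix.head_cons, Matrix.cons_val_two, Matrix.tail_cons, Matrix.cons_val_three]
    linear_combination ((1*c^4*x2^2*y1^2*y3^2) + (1*c^2*x1*x3*y0^2*y2^2) + (1*x0^2*y0^2*y2^2) + (-1*x2^2*y0^4) + (1*x2^2*y0^2*y2^2) + (-1*x2^2*y2^4)) * hx1 + ((1*c^4*x3^2*y0^2*y2^2) + (1*c^2*x0*x2*y1^2*y3^2) + (1*x1^2*y1^2*y3^2) + (-1*x3^2*y1^4) + (1*x3^2*y1^2*y3^2) + (-1*x3^2*y3^4)) * hx2 + ((-1*c^4*x1*x2^2*x3*y1*y3) + (-1*c^2*x1*x2^2*x3*y0^2) + (1*c^2*x1*x2^2*x3*y2^2) + (-1*c^2*x2^4*y1*y3) + (-1*x2^4*y0^2) + (1*x2^4*y2^2)) * hy1 + ((-1*c^4*x0*x2*x3^2*y0*y2) + (-1*c^2*x0*x2*x3^2*y1^2) + (1*c^2*x0*x2*x3^2*y3^2) + (-1*c^2*x3^4*y0*y2) + (-1*x3^4*y1^2)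 + (1*x3^4*y3^2)) * hy2
  have h03 : S0 0 * S2 3 = S0 3 * S2 0 := by
    simp only [S0, S2, Matrix.cons_val_zero, Matrix.cons_val_one, Matrix.head_cons, Matrix.cons_val_two, Matrix.tail_cons, Matrix.cons_val_three]
    linear_combination ((1*c^5*x2*x3*y0^2*y2*y3) + (1*c^3*x2*x3*y0*y3^3) + (1*c*x0*x1*y0^2*y2*y3) + (-1*c*x2*x3*y0^3*y1)) * hx1 + ((1*c^3*x0*x3*y0^2*y2*y3) + (1*c*x0*x3*y0*y3^3) + (-1*c*x1*x2*y1*y2*y3^2)) * hx2 + ((-1*c^3*x1*x2*x3^2*y0*y1) + (1*c*x0*x1*x2^2*y2*y3) + (-1*c*x2^3*x3*y0*y1)) * hy1 + ((-1*c^5*x1*x2*x3^2*y0*y3) + (-1*c^3*x2^3*x3*y0*y3) + (-1*c*x0*x3^3*y0*y3) + (1*c*x1*x2*x3^2*y1*y2)) * hy2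
  have h12 : S0 1 * S2 2 = S0 2 * S2 1 := by
    simp only [S0, S2, Matrix.cons_val_zero, Matrix.cons_val_one, Matrix.head_cons, Matrix.cons_val_two, Matrix.tail_cons, Matrix.cons_val_three]
    linear_combination ((1*c^5*x2*x3*y0*y1*y2^2) + (-1*c^3*x2*x3*y1^3*y2) + (1*c*x0*x1*y0*y1*y2^2) + (-1*c*x2*x3*y2^3*y3)) * hx1 + ((1*c^3*x0*x3*y0*y1*y2^2) + (-1*c*x0*x3*y1^3*y2) + (1*c*x1*x2*y0*y1^2*y3)) * hx2 + ((1*c^3*x1*x2*x3^2*y2*y3) + (-1*c*x0*x1*x2^2*y0*y1) + (1*c*x2^3*x3*y2*y3)) * hy1 + ((-1*c^5*x1*x2*x3^2*y1*y2) + (-1*c^3*x2^3*x3*y1*y2) + (-1*c*x0*x3^3*y1*y2) + (1*c*x1*x2*x3^2*y0*y3)) * hy2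
  have h13 : S0 1 * S2 3 = S0 3 * S2 1 := by
    simp only [S0, S2, Matrix.cons_val_zero, Matrix.cons_val_one, Matrix.head_cons, Matrix.cons_val_two, Matrix.tail_cons, Matrix.cons_val_three]
    linear_combination ((1*c^2*x1^2*y0*y1*y2*y3) + (-1*c^2*x3^2*y0*y1*y2*y3)) * hx1 + ((1*c^4*x1*x3*y0*y1*y2*y3)) * hx2 + ((-1*c^2*x0*x1*x2*x3*y1^2) + (1*c^2*x0*x1*x2*x3*y3^2)) * hy1 + ((-1*c^4*x0*x1*x2*x3*y1*y3)) * hy2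
  have h23 : S0 2 * S2 3 = S0 3 * S2 2 := by
    simp only [S0, S2, Matrix.cons_val_zero, Matrix.cons_val_one, Matrix.head_cons, Matrix.cons_val_two, Matrix.tail_cons, Matrix.cons_val_three]
    linear_combination ((1*c^3*x1*x2*y1^2*y2*y3) + (-1*c*x0*x3*y0*y2^2*y3) + (1*c*x1*x2*y1*y2^3)) * hx1 + ((1*c^5*x2*x3*y1^2*y2*y3) + (1*c^3*x2*x3*y1*y2^3) + (1*c*x0*x1*y1^2*y2*y3) + (-1*c*x2*x3*y0*y1^3)) * hx2 + ((-1*c^5*x0*x2^2*x3*y1*y2) + (-1*c^3*x2*x3^3*y1*y2) + (1*c*x0*x2^2*x3*y0*y3) + (-1*c*x1*x2^3*y1*y2)) * hy1 + ((-1*c^3*x0*x2^2*x3*y0*y1) + (1*c*x0*x1*x3^2*y2*y3) + (-1*c*x2*x3^3*y0*y1)) * hy2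
  intro i j
  fin_cases i <;> fin_cases j
  · rfl
  · exact h01
  · exact h02
  · exact h03
  · exact h01.symm
  · rfl
  · exact h12
  · exact h13
  · exact h02.symm
  · exact h12.symm
  · rfl
  · exact h23
  · exact h03.symm
  · exact h13.symm
  · exact h23.symm
  · rfl
end

section
/- Let R be a commutative ring, a, r ∈ R, and ω ∈ R with ω² − ω = a. Set ω̄ = 1 − ω, δ = ω − ω̄, and D = 4a + 1. If (x0,x1,x2,x3) satisfies the μ4-normal form equations with parameter r, then the point (δ·x0, ω·x1 − ω̄·x3, x2, ω·x3 − ω̄·x1) satisfies the twisted μ4-normal form equations with parameters (r, a): X0² − D·r·X2² = X1·X3 − a·(X1 − X3)² and X1² − X3² = X0·X2. -/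
/-- The twisting map sends points of the μ4-normal form curve with parameter `r`
to points of the twisted μ4-normal form curve with parameters `(r,a)`. -/
theorem twisting_mu4 {R : Type*} [CommRing R] (a r ω : R) (hω : ω ^ 2 - ω = a)
    (x0 x1 x2 x3 : R)
    (h1 : x0 ^ 2 - r * x2 ^ 2 = x1 * x3)
    (h2 : x1 ^ 2 - x3 ^ 2 = x0 * x2) :
    let ωb := 1 - ω
    let δ := ω - ωb
    let D := 4 * a + 1
    let y0 := δ * x0
    let y1 := ω * x1 - ωb * x3
    let y2 := x2
    let y3 := ω * x3 - ωb * x1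
    y0 ^ 2 - D * r * y2 ^ 2 = y1 * y3 - a * (y1 - y3) ^ 2 ∧
    y1 ^ 2 - y3 ^ 2 = y0 * y2 := by
  subst hω
  refine ⟨?_, ?_⟩
  · linear_combination (4 * ω ^ 2 - 4 * ω + 1) * h1 
  · linear_combination (2 * ω - 1) * h2
end

section
/- Let R be a commutative ring, a, s ∈ R, and ω ∈ R with ω² − ω = a. Set ω̄ = 1 − ω, δ = ω − ω̄, and D = 4a + 1. If (x0,x1,x2,x3) satisfies the semisplit μ4-normal form equations with parameter s, then the point (δ·x0, ω·x1 − ω̄·x3, x2, ω·x3 − ω̄·x1) satisfies the twisted semisplit μ4-normal form equations with parameters (s, a): X0² − D·X2² = X1·X3 − a·(X1 − X3)² and X1² − X3² = s·X0·X2. -/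
/-- The twisting map sends points of the semisplit μ4-normal form curve with
parameter `s` to points of the twisted semisplit μ4-normal form curve with
parameters `(s,a)`. -/
theorem twisting_semisplit_mu4 {R : Type*} [CommRing R] (a s ω : R)
    (hω : ω ^ 2 - ω = a) (x0 x1 x2 x3 : R)
    (h1 : x0 ^ 2 - x2 ^ 2 = x1 * x3)
    (h2 : x1 ^ 2 - x3 ^ 2 = s * x0 * x2) :
    let ωb := 1 - ω
    let δ := ω - ωb
    let D := 4 * a + 1
    let y0 := δ * x0
    let y1 := ω * x1 - ωb * x3
    let y2 := x2
    let y3 := ω * x3 - ωb * x1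
    y0 ^ 2 - D * y2 ^ 2 = y1 * y3 - a * (y1 - y3) ^ 2 ∧
    y1 ^ 2 - y3 ^ 2 = s * y0 * y2 := by
  subst hω
  refine ⟨?_, ?_⟩
  · linear_combination (4 * (ω ^ 2 - ω) + 1) * h1
  · linear_combination (2 * ω - 1) * h2
end

section
/- Let R be a commutative ring, a, c ∈ R, and ω ∈ R with ω² − ω = a. Set ω̄ = 1 − ω, δ = ω − ω̄, and D = 4a + 1. If (x0,x1,x2,x3) satisfies the split μ4-normal form equations with parameter c, then the point (δ·x0, ω·x1 − ω̄·x3, x2, ω·x3 − ω̄·x1) satisfies the twisted split μ4-normal form equations with parameters (c, a): X0² − D·X2² = c²·(X1·X3 − a·(X1 − X3)²) and X1² − X3² = c²·X0·X2. -/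
/-- The twisting map sends points of the split μ4-normal form curve with
parameter `c` to points of the twisted split μ4-normal form curve with
parameters `(c,a)`. -/
theorem twisting_split_mu4 {R : Type*} [CommRing R] (a c ω : R)
    (hω : ω ^ 2 - ω = a) (x0 x1 x2 x3 : R)
    (h1 : x0 ^ 2 - x2 ^ 2 = c ^ 2 * (x1 * x3))
    (h2 : x1 ^ 2 - x3 ^ 2 = c ^ 2 * (x0 * x2)) :
    let ωb := 1 - ω
    let δ := ω - ωb
    let D := 4 * a + 1
    let y0 := δ * x0
    let y1 := ω * x1 - ωb * x3
    let y2 := x2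
    let y3 := ω * x3 - ωb * x1
    y0 ^ 2 - D * y2 ^ 2 = c ^ 2 * (y1 * y3 - a * (y1 - y3) ^ 2) ∧
    y1 ^ 2 - y3 ^ 2 = c ^ 2 * (y0 * y2) := by
  subst hω
  refine ⟨?_, ?_⟩
  · linear_combination (4 * (ω ^ 2 - ω) + 1) * h1
  · linear_combination (2 * ω - 1) * h2
end

section
/- Let R be a commutative ring, r, a ∈ R, D = 4a + 1. Suppose (x0,x1,x2,x3) satisfies the twisted μ4-normal form equations with parameters (r,a). Define (y0,y1,y2,y3) = (4·x0, 2·(x1 − x3), 2·(x1 + x3), x2). Then: (1) y0² − 16·D·r·y3² = −D·y1² + y2² (the twisted Edwards equation with parameters (−D, −16Dr)); (2) y0·y3 = y1·y2 (the extended Edwards coordinate relation); (3) applying the inverse map (Y0,Y1,Y2,Y3) ↦ (Y0, Y1 + Y2, 4·Y3, −Y1 + Y2) to (y0,y1,y2,y3) yields (4·x0, 4·x1, 4·x2, 4·x3), i.e. 4 times the original point. -/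
/-- A point of the twisted μ4-normal form curve with parameters `(r,a)` maps
to the twisted Edwards curve with parameters `(−D, −16Dr)` in extended
coordinates, and the given inverse linear map recovers `4` times the point. -/
theorem twisted_mu4_to_twisted_edwards {R : Type*} [CommRing R] (r a : R)
    (x0 x1 x2 x3 : R)
    (h1 : x0 ^ 2 - (4 * a + 1) * r * x2 ^ 2 = x1 * x3 - a * (x1 - x3) ^ 2)
    (h2 : x1 ^ 2 - x3 ^ 2 = x0 * x2) :
    let D := 4 * a + 1
    let y0 := 4 * x0
    let y1 := 2 * (x1 - x3)
    let y2 := 2 * (x1 + x3)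
    let y3 := x2
    y0 ^ 2 - 16 * D * r * y3 ^ 2 = -D * y1 ^ 2 + y2 ^ 2 ∧
    y0 * y3 = y1 * y2 ∧
    ((y0, y1 + y2, 4 * y3, -y1 + y2) : R × R × R × R)
      = (4 * x0, 4 * x1, 4 * x2, 4 * x3) := by
  refine ⟨by linear_combination 16 * h1, by linear_combination (-4) * h2, by ring_nf⟩
end

section
/- Let R be a commutative ring of characteristic 2 and let a, b ∈ R. If (x0,x1,x2,x3) satisfies the binary twisted μ4-normal form equations with parameters (b,a), then the point (X, Y, Z) = (x1 + x3, x0 + x1, x2) satisfies the homogeneous Weierstrass equation Y²·Z + X·Y·Z = X³ + a·X²·Z + b·Z³. -/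
/-- Over a commutative ring of characteristic 2, a point of the binary twisted
μ4-normal form curve with parameters `(b,a)` maps to the homogeneous
Weierstrass curve `Y²Z + XYZ = X³ + aX²Z + bZ³`. -/
theorem binary_twisted_mu4_to_weierstrass {R : Type*} [CommRing R] [CharP R 2]
    (a b x0 x1 x2 x3 : R)
    (h1 : x0 ^ 2 + b * x2 ^ 2 = x1 * x3 + a * (x0 * x2))
    (h2 : x1 ^ 2 + x3 ^ 2 = x0 * x2) :
    let X := x1 + x3
    let Y := x0 + x1
    let Z := x2
    Y ^ 2 * Z + X * Y * Z = X ^ 3 + a * X ^ 2 * Z + b * Z ^ 3 := by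
  intro X Y Z
  have h2' : (2:R) = 0 := by exact_mod_cast CharP.cast_eq_zero R 2
  simp only [X, Y, Z]
  linear_combination x2 * h1 + (x1 + x3 + a * x2) * h2 + (x0*x1*x2 + x0*x2*x3 + a*x0*x2^2 + x1*x2*x3 - a*x1*x2*x3 - 3*x1*x3^2 + x1^2*x2 - a*x1^2*x2 - 4*x1^2*x3 - x1^3 - a*x2*x3^2 - 2*b*x2^3 - x3^3 + x0*x1*x2 + x1*x3^2 + 2*x1^2*x3 + b*x2^3) * h2'
end

section
/- Let R be a commutative ring and c ∈ R. Define σ((X,Z),(Y,W)) = (2·X·Y, c·(X·W + Z·Y), 2·Z·W, c·(Z·Y − X·W)). If (x0,x1,x2,x3) ∈ R⁴ satisfies x1² − x3² = c²·x0·x2 (the second equation of the twisted split μ4-normal form), then σ applied to the pair of projections ((c·x0, x1 + x3), (c·x0, x1 − x3)) equals (2c²·x0·x0, 2c²·x0·x1, 2c²·x0·x2, 2c²·x0·x3), i.e. the scalar 2c²·x0 times the original point; hence σ inverts the product of projections π1 × π2 to P¹ × P¹. -/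
/-- The map `σ((X:Z),(Y:W)) = (2XY : c(XW+ZY) : 2ZW : c(ZY−XW))` inverts the
product of projections `π1 × π2`: applied to the projections of a point
satisfying `x1² − x3² = c²·x0·x2`, it returns `2c²·x0` times the point. -/
theorem sigma_inverts_projections {R : Type*} [CommRing R] (c x0 x1 x2 x3 : R)
    (h : x1 ^ 2 - x3 ^ 2 = c ^ 2 * (x0 * x2)) :
    let X := c * x0
    let Z := x1 + x3
    let Y := c * x0
    let W := x1 - x3
    ((2 * (X * Y), c * (X * W + Z * Y), 2 * (Z * W), c * (Z * Y - X * W))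
        : R × R × R × R)
      = (2 * c ^ 2 * (x0 * x0), 2 * c ^ 2 * (x0 * x1),
         2 * c ^ 2 * (x0 * x2), 2 * c ^ 2 * (x0 * x3)) := by
  refine Prod.ext ?_ (Prod.ext ?_ (Prod.ext ?_ ?_)) <;> simp only <;> ring_nf
  · linear_combination 2 * h
end

section
/- Let k be a field of characteristic 2 and c, a ∈ k. If (x0,x1,x2,x3) satisfies the binary twisted split μ4-normal form equations with parameters (c,a), then evaluating the addition law s2 at the pair ((x0,x1,x2,x3), (c,1,0,1)) yields exactly (c²·x0·x0, c²·x0·x1, c²·x0·x2, c²·x0·x3), the scalar c²·x0 times the original point (so s2 normalizes the identity element O = (c,1,0,1)). -/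
/-- Over a field of characteristic 2, the binary addition law `s₂` evaluated at
a curve point and the identity `O = (c,1,0,1)` yields `c²·x0` times the point. -/
theorem binary_s2_normalizes_identity {k : Type*} [Field k] [CharP k 2]
    (c a x0 x1 x2 x3 : k)
    (h1 : x0 ^ 2 + x2 ^ 2 = c ^ 2 * (x1 * x3 + a * (x1 + x3) ^ 2))
    (h2 : x1 ^ 2 + x3 ^ 2 = c ^ 2 * (x0 * x2)) :
    let U00 := x0 * c
    let U11 := x1 * 1
    let U22 := x2 * 0
    let U33 := x3 * 1
    let G := (x1 + x3) * (1 + 1) * (U00 + U22)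
    (((U00 + U22) ^ 2, c * (U00 * U11 + U22 * U33 + a * G),
      (U11 + U33) ^ 2, c * (U00 * U33 + U11 * U22 + a * G)) : k × k × k × k)
      = (c ^ 2 * x0 * x0, c ^ 2 * x0 * x1, c ^ 2 * x0 * x2, c ^ 2 * x0 * x3) := by
  have h2' : (2 : k) = 0 := by exact_mod_cast CharP.cast_eq_zero k 2
  simp only [Prod.mk.injEq]
  refine ⟨by ring, ⟨by linear_combination (c ^ 2 * x0 * a * (x1 + x3)) * h2', ?_, by
    linear_combination (c ^ 2 * x0 * a * (x1 + x3)) * h2'⟩⟩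
  linear_combination h2 + (x1 * x3) * h2'
end

section
/- Let k be a field of characteristic 2 and c ∈ k. Suppose P = (s0, s1, s2, s3) satisfies the split μ4-normal form equations with parameter c, and set (t0, t1) = (c·s0, s1 + s3), the image of P on the Kummer line. Then (t0², c·t0·t1, t1²) = (c²·s0·s0, c²·s0·(s1 + s3), c²·s0·s2); in particular, projectively (s0 : s1 + s3 : s2) = (t0² : c·t0·t1 : t1²), so the Montgomery-oriented curve associated to P depends only on the Kummer image of P. -/
/-- Over a field of characteristic 2, for a point `P = (s0,s1,s2,s3)` on the
split μ4-normal form curve with Kummer image `(t0 : t1) = (c·s0 : s1 + s3)`,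
the triple `(t0², c·t0·t1, t1²)` equals `c²·s0` times `(s0, s1 + s3, s2)`;
hence the Montgomery-oriented curve depends only on the Kummer image of `P`. -/
theorem montgomery_curve_depends_on_kummer {k : Type*} [Field k] [CharP k 2]
    (c s0 s1 s2 s3 : k)
    (h1 : s0 ^ 2 + s2 ^ 2 = c ^ 2 * (s1 * s3))
    (h2 : s1 ^ 2 + s3 ^ 2 = c ^ 2 * (s0 * s2)) :
    let t0 := c * s0
    let t1 := s1 + s3
    ((t0 ^ 2, c * t0 * t1, t1 ^ 2) : k × k × k)
      = (c ^ 2 * (s0 * s0), c ^ 2 * (s0 * (s1 + s3)), c ^ 2 * (s0 * s2)) := by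
  have h2' : (2 : k) = 0 := by exact_mod_cast CharP.cast_eq_zero k 2
  refine Prod.ext (by ring) (Prod.ext (by ring) ?_)
  show (s1 + s3) ^ 2 = c ^ 2 * (s0 * s2)
  rw [add_sq, ← h2]
  ring_nf
  rw [h2']
  ring
end

section
/- Let k be a field of characteristic 2 and c, a ∈ k. Suppose (s0, s1, s2, s3) and (x0, x1, x2, x3) both satisfy the binary twisted split μ4-normal form equations with parameters (c,a). Then (s0·x0 + s2·x2)·(s2·x0 + s0·x2) = (s1·x1 + s3·x3)·(s3·x1 + s1·x3); in particular the two defining expressions of the second projection π2∘λ of the Montgomery point-recovery map agree projectively on the curve. -/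
/-- Over a field of characteristic 2, for two points of the binary twisted
split μ4-normal form curve, the two defining expressions of the second
projection `π₂ ∘ λ` of the Montgomery point-recovery map agree projectively. -/
theorem montgomery_recovery_projections_agree {k : Type*} [Field k] [CharP k 2]
    (c a s0 s1 s2 s3 x0 x1 x2 x3 : k)
    (hs1 : s0 ^ 2 + s2 ^ 2 = c ^ 2 * (s1 * s3 + a * (s1 + s3) ^ 2))
    (hs2 : s1 ^ 2 + s3 ^ 2 = c ^ 2 * (s0 * s2))
    (hx1 : x0 ^ 2 + x2 ^ 2 = c ^ 2 * (x1 * x3 + a * (x1 + x3) ^ 2))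
    (hx2 : x1 ^ 2 + x3 ^ 2 = c ^ 2 * (x0 * x2)) :
    (s0 * x0 + s2 * x2) * (s2 * x0 + s0 * x2)
      = (s1 * x1 + s3 * x3) * (s3 * x1 + s1 * x3) := by
  have hc : (2 : k) = 0 := by
    have := CharP.cast_eq_zero k 2
    exact_mod_cast this
  linear_combination s0*s2*hx1 + x0*x2*hs1 - s1*s3*hx2 - x1*x3*hs2
    + a*c^2*s0*s2*hx2 + a*c^2*x0*x2*hs2
    + a*c^2*(s0*s2*x1*x3 + x0*x2*s1*s3 + c^2*s0*s2*x0*x2)*hc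
end
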